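/- The Stitch sortition algorithm is fair: if all weights satisfy w_n < 1/M, then for each participant n, the expected voting power E[g(n;M)] equals w_n, and the selected committee always has exactly M members. -/

import Mathlib

open Finset

/-- The committee selected by `Stitch`: participant `n` (whose interval is
`[b n, b n + w n)` with `b n = ∑_{k<n} w k`) is selected iff some point `{x + i/M}` lies in
its interval. -/
noncomputable def stitchCommittee (N M : ℕ) (w : Fin N → ℝ) (x : ℝ) : Finset (Fin N) :=
  Finset.univ.filter (fun n =>
    ∃ i ∈ Finset.range M, Int.fract (x + i / M) ∈
      Set.Ico (∑ k ∈ Finset.univ.filter (· < n), w k)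
              ((∑ k ∈ Finset.univ.filter (· < n), w k) + w n))

namespace StitchAux

noncomputable def S (N : ℕ) (w : Fin N → ℝ) (j : ℕ) : ℝ :=
  ∑ k ∈ Finset.univ.filter (fun k : Fin N => (k : ℕ) < j), w k

lemma S_zero (N : ℕ) (w : Fin N → ℝ) : S N w 0 = 0 := by simp [S]

lemma S_succ {N : ℕ} (w : Fin N → ℝ) {j : ℕ} (hj : j < N) :
    S N w (j+1) = S N w j + w ⟨j, hj⟩ := by
  unfold S
  rw [show (Finset.univ.filter (fun k : Fin N => (k:ℕ) < j+1)) =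
      insert ⟨j, hj⟩ (Finset.univ.filter (fun k : Fin N => (k:ℕ) < j)) from ?_]
  · rw [Finset.sum_insert (by simp)]
    ring
  · ext k
    simp only [Finset.mem_filter, Finset.mem_univ, true_and, Finset.mem_insert, Fin.ext_iff]
    omega

lemma S_mono {N : ℕ} (w : Fin N → ℝ) (hw : ∀ n, 0 ≤ w n) : Monotone (S N w) := by
  intro j j' h
  apply Finset.sum_le_sum_of_subset_of_nonneg
  · intro k hk
    simp only [Finset.mem_filter, Finset.mem_univ, true_and] at hk ⊢
    omega
  · intro k _ _; exact hw k

lemma S_of_le {N : ℕ} (w : Fin N → ℝ) {j : ℕ} (hj : N ≤ j) : S N w j = ∑ k, w k := by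
  unfold S
  apply Finset.sum_congr _ (fun _ _ => rfl)
  ext k
  simp only [Finset.mem_filter, Finset.mem_univ, true_and, iff_true]
  exact lt_of_lt_of_le k.isLt hj

lemma b_eq {N : ℕ} (w : Fin N → ℝ) (n : Fin N) :
    (∑ k ∈ Finset.univ.filter (· < n), w k) = S N w n.val := by
  unfold S
  apply Finset.sum_congr _ (fun _ _ => rfl)
  ext k
  simp only [Finset.mem_filter, Finset.mem_univ, true_and, Fin.lt_def]


lemma exists_unique_mem {N : ℕ} (w : Fin N → ℝ) (hw : ∀ n, 0 < w n)
    (hsum : ∑ n, w n = 1) {y : ℝ} (h0 : 0 ≤ y) (h1 : y < 1) :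
    ∃! n : Fin N, y ∈ Set.Ico (S N w n.val) (S N w n.val + w n) := by
  have hw' : ∀ n, 0 ≤ w n := fun n => (hw n).le
  have hNpos : 0 < N := by
    by_contra h
    push_neg at h
    interval_cases N
    simp at hsum
  -- the set of j < N with S j ≤ y
  have hT : (0 : ℕ) ∈ (Finset.range N).filter (fun j => S N w j ≤ y) := by
    simp [hNpos, S_zero, h0]
  set T := (Finset.range N).filter (fun j => S N w j ≤ y) with hTdef
  have hTne : T.Nonempty := ⟨0, hT⟩
  set j := T.max' hTne with hjdef
  have hjmem : j ∈ T := T.max'_mem hTne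
  have hjN : j < N := by
    have := (Finset.mem_filter.mp hjmem).1
    simpa using this
  have hjle : S N w j ≤ y := (Finset.mem_filter.mp hjmem).2
  have hylt : y < S N w (j+1) := by
    by_contra h
    push_neg at h
    rcases lt_or_ge (j+1) N with h' | h'
    · have : j + 1 ∈ T := by
        simp only [hTdef, Finset.mem_filter, Finset.mem_range]
        exact ⟨h', h⟩
      have := T.le_max' _ this
      omega
    · rw [S_of_le w h', hsum] at h
      exact absurd h (not_le.mpr h1)
  refine ⟨⟨j, hjN⟩, ⟨hjle, by rwa [← S_succ w hjN]⟩, ?_⟩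
  intro m hm
  have key : ∀ a b : Fin N, S N w a.val ≤ y → y < S N w a.val + w a →
      S N w b.val ≤ y → y < S N w b.val + w b → a.val ≤ b.val := by
    intro a b ha1 _ _ hb2
    by_contra hab
    push_neg at hab
    have h1' : (a:ℕ) ≥ (b:ℕ) + 1 := hab
    have hS : S N w ((b:ℕ)+1) ≤ S N w (a:ℕ) := S_mono w hw' h1'
    rw [S_succ w b.isLt] at hS
    have : S N w (b:ℕ) + w b ≤ y := le_trans (by simpa using hS) ha1
    exact absurd hb2 (not_lt.mpr this)
  have h1' := key m ⟨j, hjN⟩ hm.1 hm.2 hjle (by rwa [← S_succ w hjN])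
  have h2' := key ⟨j, hjN⟩ m hjle (by rwa [← S_succ w hjN]) hm.1 hm.2
  exact Fin.ext (le_antisymm h1' h2')

lemma separation {M : ℕ} (hM : 1 ≤ M) {x a wn : ℝ} (hwn : wn < 1 / M)
    {i j : ℕ} (hi : i < M) (hj : j < M)
    (h1 : Int.fract (x + i / M) ∈ Set.Ico a (a + wn))
    (h2 : Int.fract (x + j / M) ∈ Set.Ico a (a + wn)) : i = j := by
  have hM0 : (0:ℝ) < M := by positivity
  obtain ⟨h1a, h1b⟩ := h1
  obtain ⟨h2a, h2b⟩ := h2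
  have hfi : Int.fract (x + i / M) = x + i / M - ⌊x + i / M⌋ := (Int.self_sub_floor _).symm
  have hfj : Int.fract (x + j / M) = x + j / M - ⌊x + j / M⌋ := (Int.self_sub_floor _).symm
  set K : ℤ := ⌊x + i / M⌋ - ⌊x + j / M⌋ with hK
  set d : ℝ := Int.fract (x + i / M) - Int.fract (x + j / M) with hd
  have habs : |d| < 1 / M := by
    rw [abs_lt]
    constructor <;> [nlinarith; nlinarith]
  have hzval : ((i:ℤ) - j - M * K : ℝ) = M * d := by
    push_cast [hd, hfi, hfj, hK]
    field_simp
    ring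
  have hz0 : (i:ℤ) - j - M * K = 0 := by
    have : |((i:ℤ) - j - M * K : ℝ)| < 1 := by
      rw [hzval, abs_mul, abs_of_pos hM0]
      calc (M:ℝ) * |d| < M * (1/M) := by
            apply mul_lt_mul_of_pos_left habs hM0
        _ = 1 := by field_simp
    have h' : |(i:ℤ) - j - M * K| < 1 := by exact_mod_cast this
    exact Int.abs_lt_one_iff.mp h'
  have heq : (i:ℤ) - j = M * K := by omega
  have hup : (M:ℤ) * K < M := by rw [← heq]; omega
  have hdown : -(M:ℤ) < M * K := by rw [← heq]; omega
  have hM1 : (1:ℤ) ≤ M := by exact_mod_cast hM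
  have hK1 : K < 1 := by nlinarith
  have hK2 : -1 < K := by nlinarith
  have hK0 : K = 0 := by omega
  rw [hK0, mul_zero] at heq
  omega


lemma sum_ite_unique {ι : Type*} (s : Finset ι) (P : ι → Prop) [DecidablePred P] (c : ℝ)
    (huniq : ∀ i ∈ s, ∀ j ∈ s, P i → P j → i = j) :
    (∑ i ∈ s, if P i then c else 0) = if ∃ i ∈ s, P i then c else 0 := by
  by_cases h : ∃ i ∈ s, P i
  · obtain ⟨i₀, hi₀, hPi₀⟩ := h
    rw [if_pos ⟨i₀, hi₀, hPi₀⟩]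
    rw [Finset.sum_eq_single_of_mem i₀ hi₀]
    · rw [if_pos hPi₀]
    · intro j hj hne
      rw [if_neg (fun hPj => hne (huniq j hj i₀ hi₀ hPj hPi₀))]
  · rw [if_neg h]
    apply Finset.sum_eq_zero
    intro i hi
    rw [if_neg (fun hPi => h ⟨i, hi, hPi⟩)]

lemma integral_fract_ite (c' a b' v : ℝ) (ha : 0 ≤ a) (hab : a ≤ b') (hb : b' ≤ 1) :
    (∫ x in (0:ℝ)..1, if Int.fract (x + c') ∈ Set.Ico a b' then v else 0) = v * (b' - a) := by
  set g : ℝ → ℝ := fun y => if Int.fract y ∈ Set.Ico a b' then v else 0 with hg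
  have hper : Function.Periodic g 1 := by
    intro y
    simp [hg, Int.fract_add_one]
  have h1 : (∫ x in (0:ℝ)..1, g (x + c')) = ∫ x in c'..(c' + 1), g x := by
    rw [intervalIntegral.integral_comp_add_right]
    norm_num [add_comm]
  have h2 : (∫ x in c'..(c' + 1), g x) = ∫ x in (0:ℝ)..(0 + 1), g x :=
    hper.intervalIntegral_add_eq c' 0
  have h3 : (∫ x in (0:ℝ)..1, g x) = v * (b' - a) := by
    rw [intervalIntegral.integral_of_le (by norm_num : (0:ℝ) ≤ 1)]
    have hcongr : (fun x => g x) =ᵐ[MeasureTheory.volume.restrict (Set.Ioc (0:ℝ) 1)]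
        (Set.Ico a b').indicator (fun _ => v) := by
      have hne : ∀ᵐ x ∂(MeasureTheory.volume : MeasureTheory.Measure ℝ), x ≠ 1 := by
        rw [MeasureTheory.ae_iff]
        simp only [ne_eq, not_not]
        have : {x : ℝ | x = 1} = {1} := by ext x; simp
        rw [this]
        exact Real.volume_singleton
      have hmem : ∀ᵐ x ∂(MeasureTheory.volume.restrict (Set.Ioc (0:ℝ) 1)),
          x ∈ Set.Ioc (0:ℝ) 1 := MeasureTheory.ae_restrict_mem measurableSet_Ioc
      filter_upwards [hmem, MeasureTheory.ae_restrict_of_ae hne] with x hx hx1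
      have hfr : Int.fract x = x := Int.fract_eq_self.mpr ⟨le_of_lt hx.1, lt_of_le_of_ne hx.2 hx1⟩
      simp only [hg, hfr, Set.indicator_apply]
    rw [MeasureTheory.integral_congr_ae hcongr,
        MeasureTheory.integral_indicator_const _ measurableSet_Ico,
        MeasureTheory.measureReal_def,
        MeasureTheory.Measure.restrict_apply measurableSet_Ico]
    have hset : MeasureTheory.volume (Set.Ico a b' ∩ Set.Ioc 0 1) = ENNReal.ofReal (b' - a) := by
      apply le_antisymm
      · calc MeasureTheory.volume (Set.Ico a b' ∩ Set.Ioc 0 1)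
            ≤ MeasureTheory.volume (Set.Ico a b') := MeasureTheory.measure_mono Set.inter_subset_left
          _ = ENNReal.ofReal (b' - a) := Real.volume_Ico
      · calc ENNReal.ofReal (b' - a) = MeasureTheory.volume (Set.Ioo a b') := Real.volume_Ioo.symm
          _ ≤ MeasureTheory.volume (Set.Ico a b' ∩ Set.Ioc 0 1) := by
              apply MeasureTheory.measure_mono
              intro x hx
              exact ⟨⟨le_of_lt hx.1, hx.2⟩, lt_of_le_of_lt ha hx.1, le_trans (le_of_lt hx.2) hb⟩
    rw [hset, ENNReal.toReal_ofReal (by linarith)]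
    simp [mul_comm]
  calc (∫ x in (0:ℝ)..1, if Int.fract (x + c') ∈ Set.Ico a b' then v else 0)
      = ∫ x in (0:ℝ)..1, g (x + c') := rfl
    _ = ∫ x in c'..(c' + 1), g x := h1
    _ = ∫ x in (0:ℝ)..(0+1), g x := h2
    _ = v * (b' - a) := by rw [zero_add]; exact h3

end StitchAux


open StitchAux in
lemma stitch_mem_iff (N M : ℕ) (w : Fin N → ℝ) (x : ℝ) (n : Fin N) :
    n ∈ stitchCommittee N M w x ↔ ∃ i ∈ Finset.range M, Int.fract (x + i / M) ∈
      Set.Ico (S N w n.val) (S N w n.val + w n) := by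
  rw [stitchCommittee, Finset.mem_filter, StitchAux.b_eq w n]
  simp

open StitchAux in
lemma stitch_integrable (c' a b' v : ℝ) :
    IntervalIntegrable (fun x => if Int.fract (x + c') ∈ Set.Ico a b' then v else 0)
      MeasureTheory.volume 0 1 := by
  have hA : MeasurableSet ((fun x : ℝ => Int.fract (x + c')) ⁻¹' Set.Ico a b') :=
    (measurable_fract.comp (measurable_id.add_const c')) measurableSet_Ico
  have heq : (fun x => if Int.fract (x + c') ∈ Set.Ico a b' then v else 0)
      = Set.indicator ((fun x : ℝ => Int.fract (x + c')) ⁻¹' Set.Ico a b') (fun _ => v) := by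
    funext x
    classical
    rw [Set.indicator_apply]
    by_cases h : a ≤ Int.fract (x + c') ∧ Int.fract (x + c') < b'
    · simp [Set.mem_preimage, Set.mem_Ico, h]
    · simp [Set.mem_preimage, Set.mem_Ico, h]
  rw [heq, intervalIntegrable_iff_integrableOn_Ioc_of_le (by norm_num : (0:ℝ) ≤ 1)]
  exact ((MeasureTheory.integrableOn_const_iff).mpr
    (Or.inr measure_Ioc_lt_top)).indicator hA

/-- Stitch is fair (each participant's expected voting power, with voting
power 1/M upon selection and x uniform on [0,1], equals its weight) and the committee
always has exactly M members. -/
theorem stmt_2 (N M : ℕ) (hM : 1 ≤ M) (w : Fin N → ℝ)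
    (hw : ∀ n, 0 < w n) (hwsum : ∑ n, w n = 1) (hmax : ∀ n, w n < 1 / M) :
    (∀ n : Fin N,
      (∫ x in (0:ℝ)..1, (if n ∈ stitchCommittee N M w x then (1 / M : ℝ) else 0)) = w n) ∧
    (∀ x ∈ Set.Ico (0:ℝ) 1, (stitchCommittee N M w x).card = M) := by
  have hw' : ∀ n, 0 ≤ w n := fun n => (hw n).le
  constructor
  · -- fairness
    intro n
    set a := StitchAux.S N w n.val with ha_def
    set b' := a + w n with hb'_def
    have ha0 : 0 ≤ a := Finset.sum_nonneg (fun k _ => hw' k)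
    have hab : a ≤ b' := by
      rw [hb'_def]; linarith [hw n]
    have hb1 : b' ≤ 1 := by
      have h1 : b' = StitchAux.S N w (n.val + 1) := by
        rw [StitchAux.S_succ w n.isLt, hb'_def, ha_def, Fin.eta]
      have h2 : StitchAux.S N w (n.val + 1) ≤ StitchAux.S N w N :=
        StitchAux.S_mono w hw' n.isLt
      rw [h1, StitchAux.S_of_le w le_rfl, hwsum] at *
      linarith [h2]
    have pointwise : ∀ x : ℝ, (if n ∈ stitchCommittee N M w x then (1 / M : ℝ) else 0)
        = ∑ i ∈ Finset.range M,
            (if Int.fract (x + i / M) ∈ Set.Ico a b' then (1 / M : ℝ) else 0) := by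
      intro x
      rw [StitchAux.sum_ite_unique (Finset.range M)
        (fun i : ℕ => Int.fract (x + i / M) ∈ Set.Ico a b') (1 / M : ℝ) ?_]
      · exact if_congr (stitch_mem_iff N M w x n) rfl rfl
      · intro i hi j hj hPi hPj
        exact StitchAux.separation hM (hmax n) (Finset.mem_range.mp hi)
          (Finset.mem_range.mp hj) hPi hPj
    have hInt : (∫ x in (0:ℝ)..1, (if n ∈ stitchCommittee N M w x then (1 / M : ℝ) else 0))
        = ∑ i ∈ Finset.range M,
            ∫ x in (0:ℝ)..1, (if Int.fract (x + i / M) ∈ Set.Ico a b' then (1 / M : ℝ) else 0) := by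
      rw [intervalIntegral.integral_congr (g := fun x => ∑ i ∈ Finset.range M,
            (if Int.fract (x + i / M) ∈ Set.Ico a b' then (1 / M : ℝ) else 0))
          (fun x _ => pointwise x)]
      exact intervalIntegral.integral_finset_sum
        (fun i _ => stitch_integrable (i / M) a b' (1 / M))
    rw [hInt]
    have heach : ∀ i ∈ Finset.range M,
        (∫ x in (0:ℝ)..1, (if Int.fract (x + i / M) ∈ Set.Ico a b' then (1 / M : ℝ) else 0))
          = (1 / M : ℝ) * (w n) := by
      intro i _
      rw [StitchAux.integral_fract_ite (i / M) a b' (1 / M) ha0 hab hb1]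
      congr 1
      rw [hb'_def]; ring
    rw [Finset.sum_congr rfl heach, Finset.sum_const, Finset.card_range, nsmul_eq_mul]
    have hM0 : (M:ℝ) ≠ 0 := by positivity
    field_simp
  · -- committee size
    intro x _
    have hcls : ∀ i : ℕ, ∃! m : Fin N, Int.fract (x + i / M) ∈
        Set.Ico (StitchAux.S N w m.val) (StitchAux.S N w m.val + w m) :=
      fun i => StitchAux.exists_unique_mem w hw hwsum (Int.fract_nonneg _) (Int.fract_lt_one _)
    have hcard := Finset.card_bij (s := Finset.range M) (t := stitchCommittee N M w x)
      (fun i _ => (hcls i).exists.choose)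
      (fun i hi => (stitch_mem_iff N M w x _).mpr ⟨i, hi, (hcls i).exists.choose_spec⟩)
      (fun i hi j hj hFij => by
        have h1 := (hcls i).exists.choose_spec
        have h2 := (hcls j).exists.choose_spec
        have hF : (hcls i).exists.choose = (hcls j).exists.choose := hFij
        rw [hF] at h1
        exact StitchAux.separation hM (hmax ((hcls j).exists.choose))
          (Finset.mem_range.mp hi) (Finset.mem_range.mp hj) h1 h2)
      (fun m hm => by
        obtain ⟨i, hi, hpt⟩ := (stitch_mem_iff N M w x m).mp hm
        exact ⟨i, hi, (hcls i).unique (hcls i).exists.choose_spec hpt⟩)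
    rw [Finset.card_range] at hcard
    exact hcard.symm
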